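/- For 0 < λ < 1 let Ex[K] = Σ_{k≥0} (1−λ)λ^k/(1−λ^{k+1}). Then as λ → 1⁻, Ex[K] = log(1/(1−λ)) + γ + O((1−λ)·log(1/(1−λ))), where γ is the Euler–Mascheroni constant; that is, there exist constants C and λ₀ < 1 such that |Ex[K] − log(1/(1−λ)) − γ| ≤ C(1−λ)log(1/(1−λ)) for all λ₀ ≤ λ < 1. -/

import Mathlib

open Real Set

set_option maxHeartbeats 4000000



noncomputable def hh (x : ℝ) : ℝ := (Real.exp x - 1)⁻¹
noncomputable def gg (x : ℝ) : ℝ := (Real.exp x - 1)⁻¹ - x⁻¹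
noncomputable def PP (x : ℝ) : ℝ := Real.log (Real.exp x - 1) - x

lemma em_pos {x : ℝ} (hx : 0 < x) : 0 < Real.exp x - 1 := by
  have := Real.one_lt_exp_iff.2 hx; linarith

lemma em_gt {x : ℝ} (hx : 0 < x) : x < Real.exp x - 1 := by
  have := Real.add_one_lt_exp (ne_of_gt hx); linarith

lemma hh_pos {x : ℝ} (hx : 0 < x) : 0 < hh x := inv_pos.2 (em_pos hx)

lemma hh_lt_inv {x : ℝ} (hx : 0 < x) : hh x < x⁻¹ :=
  inv_strictAnti₀ hx (em_gt hx)

lemma hh_antitoneOn {a b : ℝ} (ha : 0 < a) : AntitoneOn hh (Icc a b) := by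
  intro x hx y hy hxy
  have hx0 : 0 < x := lt_of_lt_of_le ha hx.1
  exact inv_anti₀ (em_pos hx0) (by
    have := Real.exp_le_exp.2 hxy; linarith)

lemma gg_nonpos {x : ℝ} (hx : 0 < x) : gg x ≤ 0 := by
  have := hh_lt_inv hx; simp only [gg, hh] at *; linarith

lemma gg_ge {x : ℝ} (hx : 0 < x) : -1 ≤ gg x := by
  -- x⁻¹ - (exp x - 1)⁻¹ ≤ 1  ⇔  exp x - 1 ≤ x * exp x  ⇔ 1 - exp (-x) ≤ x
  have h1 : Real.exp x - 1 ≤ x * Real.exp x := by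
    have h2 : 1 - x ≤ Real.exp (-x) := by have := Real.add_one_le_exp (-x); linarith
    have h3 : (1 - x) * Real.exp x ≤ Real.exp (-x) * Real.exp x :=
      mul_le_mul_of_nonneg_right h2 (Real.exp_pos x).le
    rw [← Real.exp_add, neg_add_cancel, Real.exp_zero] at h3
    nlinarith
  have he := em_pos hx
  have hgl : x⁻¹ - (Real.exp x - 1)⁻¹ ≤ 1 := by
    have heq : x⁻¹ - (Real.exp x - 1)⁻¹ = (Real.exp x - 1 - x) / (x * (Real.exp x - 1)) := by
      field_simp
    rw [heq, div_le_one (by positivity)]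
    nlinarith
  simp only [gg]; linarith

lemma gg_strictMono : StrictMonoOn gg (Ioi 0) := by
  have hderiv : ∀ x ∈ interior (Ioi (0:ℝ)), 0 < deriv gg x := by
    intro x hx
    rw [interior_Ioi] at hx
    have hx0 : (0:ℝ) < x := hx
    have he := em_pos hx0
    have h1 : HasDerivAt (fun y => (Real.exp y - 1)⁻¹)
        (-(Real.exp x) / (Real.exp x - 1) ^ 2) x := by
      exact ((Real.hasDerivAt_exp x).sub_const 1).inv (ne_of_gt he)
    have h2 : HasDerivAt (fun y : ℝ => y⁻¹) (-(x ^ 2)⁻¹) x := hasDerivAt_inv (ne_of_gt hx0)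
    have h3 : HasDerivAt gg (-(Real.exp x) / (Real.exp x - 1) ^ 2 - -(x ^ 2)⁻¹) x := h1.sub h2
    rw [h3.deriv]
    -- need x^2 * exp x < (exp x - 1)^2
    have key : x ^ 2 * Real.exp x < (Real.exp x - 1) ^ 2 := by
      have hs : x / 2 < Real.sinh (x / 2) := Real.self_lt_sinh_iff.mpr (by linarith)
      rw [Real.sinh_eq] at hs
      have h4 : x < Real.exp (x / 2) - Real.exp (-(x / 2)) := by linarith
      have h5 : x * Real.exp (x / 2) < (Real.exp (x / 2) - Real.exp (-(x / 2))) * Real.exp (x / 2) :=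
        mul_lt_mul_of_pos_right h4 (Real.exp_pos _)
      have h6 : Real.exp (x/2) * Real.exp (x/2) = Real.exp x := by
        rw [← Real.exp_add]; ring_nf
      have h7 : Real.exp (-(x/2)) * Real.exp (x/2) = 1 := by
        rw [← Real.exp_add]; simp
      have h8 : x * Real.exp (x / 2) < Real.exp x - 1 := by nlinarith
      have h9 : 0 < x * Real.exp (x/2) := by positivity
      nlinarith
    have hrw : -(Real.exp x) / (Real.exp x - 1) ^ 2 - -(x ^ 2)⁻¹
        = (x ^ 2)⁻¹ - Real.exp x / (Real.exp x - 1) ^ 2 := by ring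
    rw [hrw, sub_pos, div_lt_iff₀ (by positivity)]
    rw [inv_mul_eq_div, lt_div_iff₀ (by positivity)]
    nlinarith
  have hcont : ContinuousOn gg (Ioi 0) := by
    apply ContinuousOn.sub
    · exact ((continuous_exp.sub continuous_const).continuousOn).inv₀
        fun x hx => ne_of_gt (em_pos hx)
    · exact continuousOn_inv₀.mono fun x hx => ne_of_gt hx
  exact strictMonoOn_of_deriv_pos (convex_Ioi 0) hcont hderiv

lemma PP_neg {x : ℝ} (hx : 0 < x) : PP x < 0 := by
  have h := Real.log_lt_log (em_pos hx) (by linarith [Real.exp_pos x] : Real.exp x - 1 < Real.exp x)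
  rw [Real.log_exp] at h
  simp only [PP]; linarith

lemma PP_eq {x : ℝ} (hx : 0 < x) : PP x = Real.log (1 - Real.exp (-x)) := by
  have h1 : (1 : ℝ) - Real.exp (-x) = (Real.exp x - 1) * (Real.exp x)⁻¹ := by
    rw [Real.exp_neg]; field_simp
  rw [PP, h1, Real.log_mul (ne_of_gt (em_pos hx)) (by positivity), Real.log_inv, Real.log_exp]
  ring

lemma hh_contOn {a b : ℝ} (ha : 0 < a) (hb : 0 < b) : ContinuousOn hh (Set.uIcc a b) := by
  apply (((continuous_exp.sub continuous_const).continuousOn)).inv₀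
  intro x hx
  have : 0 < x := lt_of_lt_of_le (lt_min ha hb) hx.1
  exact ne_of_gt (em_pos this)

lemma ftc_hh {a b : ℝ} (ha : 0 < a) (hb : 0 < b) :
    ∫ x in a..b, hh x = PP b - PP a := by
  apply intervalIntegral.integral_eq_sub_of_hasDerivAt
  · intro x hx
    have hx0 : 0 < x := lt_of_lt_of_le (lt_min ha hb) hx.1
    have he := em_pos hx0
    have h1 : HasDerivAt (fun y => Real.log (Real.exp y - 1)) (Real.exp x / (Real.exp x - 1)) x :=
      ((Real.hasDerivAt_exp x).sub_const 1).log (ne_of_gt he)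
    have h2 : HasDerivAt PP (Real.exp x / (Real.exp x - 1) - 1) x := h1.sub (hasDerivAt_id x)
    have : Real.exp x / (Real.exp x - 1) - 1 = hh x := by
      simp only [hh]; field_simp; ring
    rwa [this] at h2
  · exact (hh_contOn ha hb).intervalIntegrable

lemma ftc_gg {a b : ℝ} (ha : 0 < a) (hb : 0 < b) :
    ∫ x in a..b, gg x = (PP b - Real.log b) - (PP a - Real.log a) := by
  have hinv : ∫ x in a..b, x⁻¹ = Real.log b - Real.log a := by
    rw [integral_inv (by
      intro h
      have : 0 < (0:ℝ) := lt_of_lt_of_le (lt_min ha hb) h.1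
      exact lt_irrefl 0 this)]
    rw [Real.log_div (ne_of_gt hb) (ne_of_gt ha)]
  have hint : ∫ x in a..b, gg x = (∫ x in a..b, hh x) - ∫ x in a..b, x⁻¹ := by
    have : (fun x => gg x) = fun x => hh x - x⁻¹ := by funext x; rfl
    rw [show (∫ x in a..b, gg x) = ∫ x in a..b, (hh x - x⁻¹) from by rw [this]]
    exact intervalIntegral.integral_sub ((hh_contOn ha hb).intervalIntegrable)
      (ContinuousOn.intervalIntegrable
        (continuousOn_inv₀.mono (fun x hx => ne_of_gt (lt_of_lt_of_le (lt_min ha hb) hx.1))))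
  rw [hint, ftc_hh ha hb, hinv]; ring

lemma summable_hh {s : ℝ} (hs : 0 < s) : Summable (fun n : ℕ => hh (((n : ℝ) + 1) * s)) := by
  set r : ℝ := Real.exp (-s) with hr
  have hr0 : 0 < r := Real.exp_pos _
  have hr1 : r < 1 := by
    rw [hr, Real.exp_lt_one_iff]; linarith
  have hrs : 0 < 1 - r := by linarith
  apply Summable.of_nonneg_of_le (fun n => (hh_pos (by positivity)).le)
    (f := fun n => ((1 - r)⁻¹ * r) * r ^ n)
  · intro n
    have hE : Real.exp (((n : ℝ) + 1) * s) * r ^ (n + 1) = 1 := by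
      rw [hr, ← Real.exp_nat_mul, ← Real.exp_add]
      have : ((n : ℝ) + 1) * s + (↑(n+1)) * (-s) = 0 := by push_cast; ring
      rw [this, Real.exp_zero]
    have hEpos : 0 < Real.exp (((n : ℝ) + 1) * s) := Real.exp_pos _
    have hrn : (0:ℝ) < r ^ (n+1) := by positivity
    have key : Real.exp (((n : ℝ) + 1) * s) * (1 - r) ≤ Real.exp (((n : ℝ) + 1) * s) - 1 := by
      have h2 : Real.exp (((n : ℝ) + 1) * s) * r = Real.exp ((n : ℝ) * s) := by
        rw [hr, ← Real.exp_add]; congr 1; ring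
      have h3 : (1:ℝ) ≤ Real.exp ((n : ℝ) * s) := by
        rw [← Real.exp_zero]; exact Real.exp_le_exp.2 (by positivity)
      nlinarith
    have hem : 0 < Real.exp (((n : ℝ) + 1) * s) - 1 := em_pos (by positivity)
    have h4 : hh (((n : ℝ) + 1) * s) ≤ (Real.exp (((n : ℝ) + 1) * s) * (1 - r))⁻¹ := by
      unfold hh
      exact inv_anti₀ (by positivity) key
    calc hh (((n : ℝ) + 1) * s) ≤ (Real.exp (((n : ℝ) + 1) * s) * (1 - r))⁻¹ := h4
      _ = (1 - r)⁻¹ * r ^ (n + 1) := by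
          rw [mul_inv]
          have : (Real.exp (((n : ℝ) + 1) * s))⁻¹ = r ^ (n + 1) := by
            field_simp at hE ⊢
            nlinarith [hE]
          rw [this]; ring
      _ = ((1 - r)⁻¹ * r) * r ^ n := by rw [pow_succ]; ring
  · exact (summable_geometric_of_lt_one hr0.le hr1).mul_left _

lemma main_est {s : ℝ} (hs : 0 < s) (hs8 : s ≤ 1/8) :
    |s * (∑' n : ℕ, hh (((n : ℝ) + 1) * s)) - (Real.log s⁻¹ + Real.eulerMascheroniConstant)|
      ≤ 10 * s := by
  have hss : s * s⁻¹ = 1 := mul_inv_cancel₀ hs.ne'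
  have hs1 : (8:ℝ) ≤ s⁻¹ := by
    have h := inv_anti₀ hs hs8
    norm_num at h
    linarith
  set N : ℕ := ⌊s⁻¹⌋₊ with hNdef
  have hN8 : 8 ≤ N := Nat.le_floor (by exact_mod_cast hs1)
  have hN0 : N ≠ 0 := by omega
  have hN1 : 1 ≤ N := by omega
  have hNr : (0:ℝ) < N := by exact_mod_cast Nat.pos_of_ne_zero hN0
  have hNle : (N : ℝ) ≤ s⁻¹ := Nat.floor_le (by positivity)
  have hNgt : s⁻¹ - 1 < (N:ℝ) := Nat.sub_one_lt_floor _
  have hNs_pos : 0 < (N:ℝ) * s := by positivity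
  have hNs_le1 : (N:ℝ) * s ≤ 1 := by nlinarith
  have hNs_ge : 7/8 ≤ (N:ℝ) * s := by nlinarith
  have hsum := summable_hh hs
  set f : ℕ → ℝ := fun n => hh (((n : ℝ) + 1) * s) with hf
  have hsplit : (∑' n, f n) = (∑ i ∈ Finset.range N, f i) + ∑' k, f (k + N) :=
    (hsum.sum_add_tsum_nat_add N).symm
  set Gs : ℝ := ∑ i ∈ Finset.range N, gg (((i:ℝ)+1)*s) with hGs
  have hsum_head : ∑ i ∈ Finset.range N, f i = s⁻¹ * (harmonic N : ℝ) + Gs := by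
    have h1 : ∀ i : ℕ, f i = s⁻¹ * ((i:ℝ)+1)⁻¹ + gg (((i:ℝ)+1)*s) := by
      intro i
      have hi : (0:ℝ) < ((i:ℝ)+1)*s := by positivity
      simp only [hf, hh, gg]
      rw [mul_inv]
      ring
    rw [Finset.sum_congr rfl (fun i _ => h1 i), Finset.sum_add_distrib]
    congr 1
    rw [harmonic, ← Finset.mul_sum]
    push_cast
    ring
  -- G-part analysis
  set f₁ : ℝ → ℝ := fun x => gg (x * s) with hf₁
  set a : ℕ → ℝ := fun i => f₁ (1 + (i:ℝ)) with ha
  have hcast : (1:ℝ) + ((N - 1 : ℕ) : ℝ) = (N : ℝ) := by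
    rw [Nat.cast_sub hN1]; push_cast; ring
  have hmono : MonotoneOn f₁ (Icc (1:ℝ) (1 + ((N-1 : ℕ) : ℝ))) := by
    intro x hx y hy hxy
    have hx0 : 0 < x * s := by nlinarith [hx.1]
    have hy0 : 0 < y * s := by nlinarith [hy.1]
    rcases eq_or_lt_of_le hxy with h | h
    · rw [h]
    · exact (gg_strictMono (Set.mem_Ioi.mpr hx0) (Set.mem_Ioi.mpr hy0)
        (by nlinarith)).le
  have hlow := hmono.integral_le_sum
  have hupp := hmono.sum_le_integral
  rw [hcast] at hlow hupp
  set I : ℝ := ∫ x in (1:ℝ)..(N:ℝ), f₁ x with hI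
  have hIval : I = s⁻¹ * ((PP ((N:ℝ)*s) - Real.log ((N:ℝ)*s)) - (PP s - Real.log s)) := by
    rw [hI]
    show (∫ x in (1:ℝ)..(N:ℝ), gg (x * s)) = _
    rw [intervalIntegral.integral_comp_mul_right gg hs.ne', one_mul, ftc_gg hs hNs_pos,
      smul_eq_mul]
  have hlow' : I ≤ ∑ i ∈ Finset.range (N-1), a (i+1) := by
    refine le_trans hlow (le_of_eq (Finset.sum_congr rfl fun i _ => rfl))
  have hupp' : ∑ i ∈ Finset.range (N-1), a i ≤ I := by
    refine le_trans (le_of_eq (Finset.sum_congr rfl fun i _ => rfl)) hupp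
  have hshift : ∑ i ∈ Finset.range (N-1), a (i+1)
      = ∑ i ∈ Finset.range (N-1), a i + a (N-1) - a 0 := by
    have h1 := Finset.sum_range_succ a (N-1)
    have h2 := Finset.sum_range_succ' a (N-1)
    rw [h1] at h2
    linarith
  have haN : a (N-1) = gg ((N:ℝ)*s) := by
    simp only [ha, hf₁, hcast]
  have ha0 : a 0 = gg s := by
    simp only [ha, hf₁]
    norm_num
  have hGsplit : Gs = gg s + ∑ i ∈ Finset.range (N-1), a (i+1) := by
    have h2 := Finset.sum_range_succ' (fun i : ℕ => gg (((i:ℝ)+1)*s)) (N-1)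
    have h3 : (N-1)+1 = N := by omega
    rw [h3] at h2
    rw [hGs, h2, add_comm]
    congr 1
    · norm_num
    · apply Finset.sum_congr rfl
      intro i _
      simp only [ha, hf₁]
      congr 1
      push_cast
      ring
  have hGs_lb : I + gg s ≤ Gs := by rw [hGsplit]; linarith
  have hGs_ub : Gs ≤ I + gg ((N:ℝ)*s) := by
    rw [hGsplit, hshift, haN, ha0]; linarith
  -- tail
  set T : ℝ := ∑' k, f (k + N) with hT
  set f₂ : ℝ → ℝ := fun x => hh (x * s) with hf₂
  have hsumT : Summable (fun k => f (k + N)) := (summable_nat_add_iff N).2 hsum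
  have hanti : ∀ M : ℕ, ∀ x₀ : ℝ, 0 < x₀ → AntitoneOn f₂ (Icc x₀ (x₀ + M)) := by
    intro M x₀ hx₀ x hx y hy hxy
    exact hh_antitoneOn (a := x₀ * s) (b := (x₀ + M) * s) (by positivity)
      ⟨by nlinarith [hx.1], by nlinarith [hx.2]⟩
      ⟨by nlinarith [hy.1], by nlinarith [hy.2]⟩ (by nlinarith)
  have hIntf₂ : ∀ u v : ℝ, 0 < u → 0 < v → ∫ x in u..v, f₂ x = s⁻¹ * (PP (v*s) - PP (u*s)) := by
    intro u v hu hv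
    show (∫ x in u..v, hh (x*s)) = _
    rw [intervalIntegral.integral_comp_mul_right hh hs.ne', ftc_hh (by positivity) (by positivity),
      smul_eq_mul]
  have hTupper : T ≤ s⁻¹ * (-PP ((N:ℝ)*s)) := by
    apply Real.tsum_le_of_sum_range_le (fun k => (hh_pos (by positivity)).le)
    intro M
    have h5 := (hanti M (N:ℝ) hNr).sum_le_integral
    have h6 : ∑ k ∈ Finset.range M, f (k + N) = ∑ i ∈ Finset.range M, f₂ ((N:ℝ) + ((i+1:ℕ):ℝ)) := by
      apply Finset.sum_congr rfl
      intro i _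
      simp only [hf, hf₂]
      congr 1
      push_cast
      ring
    rw [h6]
    refine le_trans h5 ?_
    rw [hIntf₂ (N:ℝ) ((N:ℝ)+M) hNr (by positivity)]
    have := PP_neg (x := ((N:ℝ)+M)*s) (by positivity)
    have h7 : PP (((N:ℝ)+M)*s) - PP ((N:ℝ)*s) ≤ -PP ((N:ℝ)*s) := by linarith
    have : (0:ℝ) < s⁻¹ := by positivity
    nlinarith
  have hTlower : s⁻¹ * (-PP (((N:ℝ)+1)*s)) ≤ T := by
    set u : ℕ → ℝ := fun M => s⁻¹ * (PP (((N:ℝ)+1+M)*s) - PP (((N:ℝ)+1)*s)) with hu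
    have hub : ∀ M, u M ≤ T := by
      intro M
      have h5 := (hanti M ((N:ℝ)+1) (by positivity)).integral_le_sum
      have h6 : ∑ i ∈ Finset.range M, f₂ ((N:ℝ)+1 + (i:ℝ)) = ∑ i ∈ Finset.range M, f (i + N) := by
        apply Finset.sum_congr rfl
        intro i _
        simp only [hf, hf₂]
        congr 1
        push_cast
        ring
      rw [h6] at h5
      have h7 : ∑ i ∈ Finset.range M, f (i + N) ≤ T :=
        hsumT.sum_le_tsum (Finset.range M) (fun i _ => (hh_pos (by positivity)).le)
      rw [hu]
      calc s⁻¹ * (PP (((N:ℝ)+1+M)*s) - PP (((N:ℝ)+1)*s))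
          = ∫ x in ((N:ℝ)+1)..((N:ℝ)+1+M), f₂ x := by
            rw [hIntf₂ _ _ (by positivity) (by positivity)]
        _ ≤ ∑ i ∈ Finset.range M, f (i + N) := h5
        _ ≤ T := h7
    have hlim : Filter.Tendsto u Filter.atTop (nhds (s⁻¹ * (0 - PP (((N:ℝ)+1)*s)))) := by
      apply Filter.Tendsto.const_mul
      apply Filter.Tendsto.sub_const
      have harg : Filter.Tendsto (fun M : ℕ => ((N:ℝ)+1+M)*s) Filter.atTop Filter.atTop := by
        apply Filter.Tendsto.atTop_mul_const hs
        exact Filter.tendsto_atTop_add_const_left _ _ tendsto_natCast_atTop_atTop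
      have hefn : Filter.Tendsto (fun M : ℕ => 1 - Real.exp (-(((N:ℝ)+1+M)*s)))
          Filter.atTop (nhds 1) := by
        have := Real.tendsto_exp_neg_atTop_nhds_zero.comp harg
        simpa using Filter.Tendsto.const_sub 1 this
      have hlog : Filter.Tendsto (fun M : ℕ => Real.log (1 - Real.exp (-(((N:ℝ)+1+M)*s))))
          Filter.atTop (nhds 0) := by
        have := ((Real.continuousAt_log (by norm_num : (1:ℝ) ≠ 0)).tendsto).comp hefn
        simpa [Function.comp_def] using this
      apply hlog.congr
      intro M
      rw [← PP_eq (by positivity)]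
    have := le_of_tendsto hlim (Filter.Eventually.of_forall hub)
    simpa using this
  -- PP difference bound
  have hPPmono : PP ((N:ℝ)*s) ≤ PP (((N:ℝ)+1)*s) := by
    have h := ftc_hh hNs_pos (by positivity : (0:ℝ) < ((N:ℝ)+1)*s)
    have h2 : (0:ℝ) ≤ ∫ x in (N:ℝ)*s..((N:ℝ)+1)*s, hh x := by
      apply intervalIntegral.integral_nonneg (by nlinarith)
      intro x hx
      exact (hh_pos (lt_of_lt_of_le hNs_pos hx.1)).le
    linarith [h ▸ h2]
  have hPPdiff : PP (((N:ℝ)+1)*s) - PP ((N:ℝ)*s) ≤ 2*s := by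
    rw [← ftc_hh hNs_pos (by positivity : (0:ℝ) < ((N:ℝ)+1)*s)]
    have hab : (N:ℝ)*s ≤ ((N:ℝ)+1)*s := by nlinarith
    have hmon : ∀ x ∈ Icc ((N:ℝ)*s) (((N:ℝ)+1)*s), hh x ≤ hh ((N:ℝ)*s) := by
      intro x hx
      exact hh_antitoneOn hNs_pos (Set.left_mem_Icc.mpr hab) hx hx.1
    have h1 : ∫ x in (N:ℝ)*s..((N:ℝ)+1)*s, hh x ≤ ∫ _x in (N:ℝ)*s..((N:ℝ)+1)*s, hh ((N:ℝ)*s) := by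
      apply intervalIntegral.integral_mono_on hab
      · exact ((hh_contOn hNs_pos (by positivity)).intervalIntegrable)
      · exact intervalIntegrable_const
      · exact hmon
    rw [intervalIntegral.integral_const, smul_eq_mul] at h1
    have h2 : hh ((N:ℝ)*s) ≤ 2 := by
      have ha := hh_lt_inv hNs_pos
      have hb : ((N:ℝ)*s)⁻¹ ≤ 8/7 := by
        rw [inv_le_comm₀ hNs_pos (by norm_num)]
        linarith
      linarith
    have h3 : (((N:ℝ)+1)*s - (N:ℝ)*s) = s := by ring
    rw [h3] at h1
    nlinarith [hh_pos hNs_pos]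
  -- gamma bounds
  have hγ1 : Real.eulerMascheroniConstant < (harmonic N : ℝ) - Real.log N := by
    have h := Real.eulerMascheroniConstant_lt_eulerMascheroniSeq' N
    rwa [Real.eulerMascheroniSeq', if_neg hN0] at h
  have hγ2 : (harmonic N : ℝ) - Real.log ((N:ℝ)+1) < Real.eulerMascheroniConstant := by
    have h := Real.eulerMascheroniSeq_lt_eulerMascheroniConstant N
    rwa [Real.eulerMascheroniSeq] at h
  have hloggap : Real.log ((N:ℝ)+1) - Real.log N ≤ 2*s := by
    have h := Real.log_le_sub_one_of_pos (x := ((N:ℝ)+1)/N) (by positivity)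
    rw [Real.log_div (by positivity) (by positivity)] at h
    have h2 : ((N:ℝ)+1)/N - 1 = (N:ℝ)⁻¹ := by field_simp; ring
    have h3 : (N:ℝ)⁻¹ ≤ (8/7)*s := by
      rw [inv_le_comm₀ hNr (by positivity)]
      have h4 : ((8/7:ℝ)*s)⁻¹ = (7/8)*s⁻¹ := by
        rw [mul_inv]; norm_num
      rw [h4]
      linarith
    linarith
  -- log s - PP s bounds
  have hes1 : 0 < 1 - Real.exp (-s) := by
    have : Real.exp (-s) < 1 := Real.exp_lt_one_iff.2 (by linarith)
    linarith
  have hPPs_le : PP s ≤ Real.log s := by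
    rw [PP_eq hs]
    apply Real.log_le_log hes1
    have := Real.add_one_le_exp (-s)
    linarith
  have hPPs_ge : Real.log s - PP s ≤ s := by
    rw [PP_eq hs]
    have hexpb := Real.exp_bound (x := -s) (by rw [abs_neg, abs_of_pos hs]; linarith)
      (n := 2) (by norm_num)
    have hsum2 : ∑ m ∈ Finset.range 2, (-s) ^ m / (m.factorial : ℝ) = 1 - s := by
      simp [Finset.sum_range_succ]
      ring
    rw [hsum2, abs_neg, abs_of_pos hs] at hexpb
    norm_num [Nat.factorial] at hexpb
    have h1 : Real.exp (-s) - (1 - s) ≤ s^2 * (3/4) := (abs_le.1 hexpb).2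
    have hs2 : s^2 ≤ (1/8)*s := by
      rw [sq]
      exact mul_le_mul_of_nonneg_right hs8 hs.le
    have hrge : (29/32)*s ≤ 1 - Real.exp (-s) := by linarith
    have hrpos : (0:ℝ) < 1 - Real.exp (-s) := by linarith
    have h := Real.log_le_sub_one_of_pos (x := s / (1 - Real.exp (-s))) (by positivity)
    rw [Real.log_div hs.ne' hrpos.ne'] at h
    have h2 : s / (1 - Real.exp (-s)) - 1 ≤ s := by
      rw [sub_le_iff_le_add, div_le_iff₀ hrpos]
      have h1' : s - (3/4)*s^2 ≤ 1 - Real.exp (-s) := by linarith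
      have h3 := mul_le_mul_of_nonneg_left h1' (by linarith : (0:ℝ) ≤ s+1)
      have hcube : s*s^2 ≤ (1/8)*s^2 := mul_le_mul_of_nonneg_right hs8 (by positivity)
      nlinarith [h3, hcube]
    linarith
  -- assemble
  set γ := Real.eulerMascheroniConstant
  set SS : ℝ := ∑' n, f n with hSS
  have hJ : s * I = (PP ((N:ℝ)*s) - Real.log ((N:ℝ)*s)) - (PP s - Real.log s) := by
    rw [hIval, ← mul_assoc, hss, one_mul]
  have hlogNs : Real.log ((N:ℝ)*s) = Real.log N + Real.log s :=
    Real.log_mul hNr.ne' hs.ne'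
  have hmain : s * SS - (Real.log s⁻¹ + γ)
      = ((harmonic N : ℝ) - Real.log N - γ) + (Real.log s - PP s)
        + (s * Gs - s * I) + (s * T + PP ((N:ℝ)*s)) := by
    rw [hsplit, hsum_head]
    rw [Real.log_inv]
    have : s * (s⁻¹ * (harmonic N : ℝ) + Gs + T) = (harmonic N : ℝ) + s * Gs + s * T := by
      field_simp
    rw [this, hJ, hlogNs]
    ring
  have hGsI_ub : s * Gs - s * I ≤ 0 := by
    have := gg_nonpos hNs_pos
    nlinarith
  have hGsI_lb : -s ≤ s * Gs - s * I := by
    have := gg_ge hs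
    nlinarith
  have hTub : s * T + PP ((N:ℝ)*s) ≤ 0 := by
    have h := hTupper
    have : s * T ≤ s * (s⁻¹ * (-PP ((N:ℝ)*s))) := by nlinarith
    rw [← mul_assoc, hss, one_mul] at this
    linarith
  have hTlb : -(2*s) ≤ s * T + PP ((N:ℝ)*s) := by
    have h := hTlower
    have h2 : s * (s⁻¹ * (-PP (((N:ℝ)+1)*s))) ≤ s * T := by nlinarith
    rw [← mul_assoc, hss, one_mul] at h2
    linarith
  have hγub : (harmonic N : ℝ) - Real.log N - γ ≤ 2*s := by linarith
  have hγlb : 0 ≤ (harmonic N : ℝ) - Real.log N - γ := by linarith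
  rw [hmain, abs_le]
  constructor
  · linarith
  · linarith

lemma gamma_lt_one : Real.eulerMascheroniConstant < 1 := by
  have h := Real.eulerMascheroniConstant_lt_eulerMascheroniSeq' 1
  rwa [Real.eulerMascheroniSeq'_one] at h

lemma gamma_pos : 0 < Real.eulerMascheroniConstant := by
  have := Real.one_half_lt_eulerMascheroniConstant
  linarith

/-- As `λ → 1⁻`, `Ex[K] = log(1/(1−λ)) + γ + O((1−λ)·log(1/(1−λ)))`. -/
theorem stmt14 :
    ∃ C : ℝ, ∃ lam0 : ℝ, 0 < lam0 ∧ lam0 < 1 ∧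
      ∀ lam : ℝ, lam0 ≤ lam → lam < 1 →
        |(∑' k : ℕ, (1 - lam) * lam ^ k / (1 - lam ^ (k + 1)))
            - Real.log (1 / (1 - lam)) - Real.eulerMascheroniConstant|
          ≤ C * (1 - lam) * Real.log (1 / (1 - lam)) := by
  refine ⟨30, 19/20, by norm_num, by norm_num, ?_⟩
  intro lam hlam0 hlam1
  set γ := Real.eulerMascheroniConstant with hγ
  set t : ℝ := 1 - lam with ht
  have hlam_pos : 0 < lam := by linarith
  have ht_pos : 0 < t := by simp only [ht]; linarith
  have ht20 : t ≤ 1/20 := by simp only [ht]; linarith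
  set s : ℝ := Real.log lam⁻¹ with hs
  have hlam_lt : 1 < lam⁻¹ := (one_lt_inv_iff₀).2 ⟨hlam_pos, hlam1⟩
  have hs_pos : 0 < s := Real.log_pos hlam_lt
  have hlam_exp : lam = Real.exp (-s) := by
    rw [hs, Real.log_inv, neg_neg, Real.exp_log hlam_pos]
  have hts : t ≤ s := by
    have h := Real.log_le_sub_one_of_pos hlam_pos
    rw [hs, Real.log_inv]
    simp only [ht]
    linarith
  have hlamc : lam⁻¹ - 1 = t * lam⁻¹ := by field_simp; linarith
  have hst : s ≤ t * lam⁻¹ := by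
    have h := Real.log_le_sub_one_of_pos (x := lam⁻¹) (by positivity)
    rw [hs]
    linarith [hlamc ▸ h]
  have hlaminv : lam⁻¹ ≤ 20/19 := by
    rw [inv_le_comm₀ hlam_pos (by norm_num)]
    linarith
  have hst2 : s ≤ (20/19) * t := by
    calc s ≤ t * lam⁻¹ := hst
      _ ≤ t * (20/19) := by nlinarith
      _ = (20/19) * t := by ring
  have hs8 : s ≤ 1/8 := by nlinarith
  -- termwise identity
  have hterm : ∀ k : ℕ, (1 - lam) * lam ^ k / (1 - lam ^ (k + 1))
      = (Real.exp s - 1) * hh (((k : ℝ) + 1) * s) := by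
    intro k
    have hpk : lam ^ (k+1) = Real.exp (-(((k:ℝ)+1)*s)) := by
      rw [hlam_exp, ← Real.exp_nat_mul]
      congr 1
      push_cast
      ring
    have hp1 : lam ^ (k+1) < 1 := pow_lt_one₀ hlam_pos.le hlam1 (Nat.succ_ne_zero k)
    have hp0 : (0:ℝ) < lam ^ (k+1) := pow_pos hlam_pos _
    have hEeq : Real.exp (((k:ℝ)+1)*s) = (lam ^ (k+1))⁻¹ := by
      rw [hpk, ← Real.exp_neg, neg_neg]
    have hexp_s : Real.exp s = lam⁻¹ := by
      rw [hlam_exp, ← Real.exp_neg, neg_neg]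
    show (1 - lam) * lam ^ k / (1 - lam ^ (k + 1)) = (Real.exp s - 1) * (Real.exp (((k:ℝ)+1)*s) - 1)⁻¹
    rw [hEeq, hexp_s]
    have h1 : (lam ^ (k+1))⁻¹ - 1 = (1 - lam ^ (k+1)) / lam ^ (k+1) := by field_simp
    rw [h1, inv_div]
    have h2 : lam⁻¹ - 1 = (1 - lam) / lam := by field_simp
    rw [h2, pow_succ]
    have hne : 1 - lam ^ k * lam ≠ 0 := by
      rw [← pow_succ]
      linarith [hp1]
    field_simp
  have hsumhh := summable_hh hs_pos
  have htsum : (∑' k : ℕ, (1 - lam) * lam ^ k / (1 - lam ^ (k + 1)))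
      = (Real.exp s - 1) * ∑' n : ℕ, hh (((n : ℝ) + 1) * s) := by
    rw [← tsum_mul_left]
    exact tsum_congr hterm
  set SS : ℝ := ∑' n : ℕ, hh (((n : ℝ) + 1) * s) with hSS
  have hSS_nonneg : 0 ≤ SS :=
    tsum_nonneg (fun n => (hh_pos (by positivity)).le)
  have hmain := main_est hs_pos hs8
  have hδ_lb : 0 ≤ Real.exp s - 1 - s := by
    have := Real.add_one_le_exp s; linarith
  have hexpb := Real.exp_bound (x := s) (by rw [abs_of_pos hs_pos]; linarith)
    (n := 2) (by norm_num)
  have hsum2 : ∑ m ∈ Finset.range 2, s ^ m / (m.factorial : ℝ) = 1 + s := by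
    simp [Finset.sum_range_succ]
  rw [hsum2, abs_of_pos hs_pos] at hexpb
  norm_num [Nat.factorial] at hexpb
  have hδ_ub : Real.exp s - 1 - s ≤ (3/4) * s^2 := by
    have := (abs_le.1 hexpb).2; linarith
  have hlogs_pos : 0 < Real.log s⁻¹ :=
    Real.log_pos ((one_lt_inv_iff₀).2 ⟨hs_pos, by linarith⟩)
  have hA_ub : s * SS ≤ Real.log s⁻¹ + γ + 10 * s := by
    have := (abs_le.1 hmain).2; linarith
  have hγ1 : γ ≤ 1 := gamma_lt_one.le
  have hγ0 : 0 ≤ γ := gamma_pos.le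
  have hδSS : (Real.exp s - 1 - s) * SS ≤ (3/4) * s * (Real.log s⁻¹ + γ + 10 * s) := by
    calc (Real.exp s - 1 - s) * SS ≤ ((3/4) * s^2) * SS :=
          mul_le_mul_of_nonneg_right hδ_ub hSS_nonneg
      _ = (3/4) * s * (s * SS) := by ring
      _ ≤ (3/4) * s * (Real.log s⁻¹ + γ + 10*s) :=
          mul_le_mul_of_nonneg_left hA_ub (by positivity)
  have hδSS0 : 0 ≤ (Real.exp s - 1 - s) * SS := mul_nonneg hδ_lb hSS_nonneg
  have hstep1 : |(Real.exp s - 1) * SS - (Real.log s⁻¹ + γ)|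
      ≤ 10*s + (3/4)*s*(Real.log s⁻¹ + γ + 10*s) := by
    have hid : (Real.exp s - 1) * SS - (Real.log s⁻¹ + γ)
        = (s * SS - (Real.log s⁻¹ + γ)) + (Real.exp s - 1 - s) * SS := by ring
    rw [hid]
    refine le_trans (abs_add_le _ _) ?_
    have h2 : |(Real.exp s - 1 - s) * SS| ≤ (3/4)*s*(Real.log s⁻¹ + γ + 10*s) := by
      rw [abs_of_nonneg hδSS0]; exact hδSS
    linarith [hmain]
  -- log(1/t) vs log(1/s)
  have hlogts_lb : Real.log s⁻¹ ≤ Real.log t⁻¹ :=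
    Real.log_le_log (by positivity) (inv_anti₀ ht_pos hts)
  have hlogts_ub : Real.log t⁻¹ - Real.log s⁻¹ ≤ 2*t := by
    have h0 : Real.log t⁻¹ - Real.log s⁻¹ = Real.log (s / t) := by
      rw [Real.log_div hs_pos.ne' ht_pos.ne', Real.log_inv, Real.log_inv]
      ring
    rw [h0]
    have h1 := Real.log_le_sub_one_of_pos (x := s/t) (by positivity)
    have h2 : s / t ≤ lam⁻¹ := by
      rw [div_le_iff₀ ht_pos]
      nlinarith
    nlinarith
  -- final bound
  have hL1 : 1 ≤ Real.log t⁻¹ := by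
    have h1 : Real.exp 1 ≤ t⁻¹ := by
      have := Real.exp_one_lt_d9
      have h2 : (20:ℝ) ≤ t⁻¹ := by
        rw [le_inv_comm₀ (by norm_num) ht_pos]
        linarith
      linarith
    calc (1:ℝ) = Real.log (Real.exp 1) := by rw [Real.log_exp]
      _ ≤ Real.log t⁻¹ := Real.log_le_log (Real.exp_pos 1) h1
  rw [one_div, htsum]
  have hid2 : (Real.exp s - 1) * SS - Real.log t⁻¹ - γ
      = ((Real.exp s - 1) * SS - (Real.log s⁻¹ + γ)) - (Real.log t⁻¹ - Real.log s⁻¹) := by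
    ring
  rw [hid2]
  have habs : |((Real.exp s - 1) * SS - (Real.log s⁻¹ + γ)) - (Real.log t⁻¹ - Real.log s⁻¹)|
      ≤ (10*s + (3/4)*s*(Real.log s⁻¹ + γ + 10*s)) + 2*t := by
    refine le_trans (abs_sub _ _) ?_
    have : |Real.log t⁻¹ - Real.log s⁻¹| ≤ 2*t := by
      rw [abs_of_nonneg (by linarith)]
      exact hlogts_ub
    linarith [hstep1]
  refine le_trans habs ?_
  set L := Real.log t⁻¹ with hL
  have hB : Real.log s⁻¹ + γ + 10*s ≤ L + 9/4 := by linarith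
  have hC : (3/4)*s*(Real.log s⁻¹ + γ + 10*s) ≤ (3/4)*((20/19)*t)*(L + 9/4) := by
    calc (3/4)*s*(Real.log s⁻¹ + γ + 10*s) ≤ (3/4)*s*(L + 9/4) :=
        mul_le_mul_of_nonneg_left hB (by positivity)
      _ ≤ (3/4)*((20/19)*t)*(L + 9/4) := by
        apply mul_le_mul_of_nonneg_right _ (by linarith)
        linarith
  have htL : t ≤ t * L := by nlinarith
  have htL2 : (3/4)*((20/19)*t)*(L + 9/4) = (15/19)*(t*L) + (135/76)*t := by ring
  nlinarith [htL, hst2, ht_pos.le, hL1]
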